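/- arXiv:1410.2190 — 2 statements merged into one kernel-verified Lean document; each statement's English description precedes it below -/
import Mathlib

section
/- For every C > 0 there exists an integer k0 such that for all k ≥ k0, all d > 0 with 2^{k−1}·ln 2 − C ≤ d/k ≤ 2^{k−1}·ln 2 − 2, and all β ≥ 0: Λ_β(0) > Λ_β(α) for all α ∈ [−1,1]∖{0}. -/
noncomputable section

open Finset Filter Real
open scoped Classical BigOperators

/-- The set of all `k`-element subsets of `Fin n` (the potential edges of a
`k`-uniform hypergraph on `[n]`). -/
def kSets (n k : ℕ) : Finset (Finset (Fin n)) :=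
  Finset.univ.filter fun e => e.card = k

/-- An edge is monochromatic under the 2-coloring `σ`. -/
def isMono {n : ℕ} (σ : Fin n → Bool) (e : Finset (Fin n)) : Prop :=
  ∀ v ∈ e, ∀ w ∈ e, σ v = σ w

/-- The number `E_H(σ)` of monochromatic edges of the hypergraph `H` under `σ`. -/
def monoCount {n : ℕ} (H : Finset (Finset (Fin n))) (σ : Fin n → Bool) : ℕ :=
  (H.filter fun e => isMono σ e).card

/-- The partition function `Z_β(H)`. -/
def Zp {n : ℕ} (β : ℝ) (H : Finset (Finset (Fin n))) : ℝ :=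
  ∑ τ : Fin n → Bool, Real.exp (-β * (monoCount H τ : ℝ))

/-- Probability of obtaining the hypergraph `H` in the binomial model `H_k(n,p)`. -/
def probHnp (n k : ℕ) (p : ℝ) (H : Finset (Finset (Fin n))) : ℝ :=
  if H ⊆ kSets n k then p ^ H.card * (1 - p) ^ ((kSets n k).card - H.card) else 0

/-- Expectation of `f` over `H_k(n,p)`. -/
def expHnp (n k : ℕ) (p : ℝ) (f : Finset (Finset (Fin n)) → ℝ) : ℝ :=
  ∑ H : Finset (Finset (Fin n)), probHnp n k p H * f H

/-- Probability of an event under `H_k(n,p)`. -/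
def prHnp (n k : ℕ) (p : ℝ) (A : Finset (Finset (Fin n)) → Prop) : ℝ :=
  expHnp n k p fun H => if A H then 1 else 0

/-- The edge probability `p = d / C(n-1,k-1)`. -/
def pEdge (n k : ℕ) (d : ℝ) : ℝ := d / ((n - 1).choose (k - 1) : ℝ)

/-- The first-moment value `ln 2 + (d/k)·ln(1 − 2^{1−k}(1 − e^{−β}))`. -/
def phiBound (k : ℕ) (d β : ℝ) : ℝ :=
  Real.log 2 + d / k * Real.log (1 - (2:ℝ) ^ ((1:ℤ) - k) * (1 - Real.exp (-β)))

/-- The sequence `n ↦ (1/n)·E[ln Z_β(H_k(n,p))]` with `p = d/C(n-1,k-1)`. -/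
def freeEnergySeq (k : ℕ) (d β : ℝ) (n : ℕ) : ℝ :=
  expHnp n k (pEdge n k d) (fun H => Real.log (Zp β H)) / n

/-- The function `Σ_{k,d}(β)`. -/
def SigmaKD (k : ℕ) (d β : ℝ) : ℝ :=
  (β + 1) * Real.exp (-β + k * Real.log 2) * Real.log 2
    - 2 * (d / k - (2:ℝ) ^ (k - 1) * Real.log 2 + Real.log 2)

/-- `m = ⌈dn/k⌉`. -/
def mOf (d : ℝ) (k n : ℕ) : ℕ := ⌈d * n / (k:ℝ)⌉₊

/-- Number of monochromatic edges, with multiplicity, of a multi-hypergraph given as a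
tuple of `m` edges. -/
def monoCountM {n m : ℕ} (H : Fin m → Finset (Fin n)) (σ : Fin n → Bool) : ℕ :=
  (Finset.univ.filter fun i : Fin m => isMono σ (H i)).card

/-- Partition function of a multi-hypergraph. -/
def ZpM {n m : ℕ} (β : ℝ) (H : Fin m → Finset (Fin n)) : ℝ :=
  ∑ τ : Fin n → Bool, Real.exp (-β * (monoCountM H τ : ℝ))

/-- Expectation over `H'_k(n,m)`: `m` edges chosen uniformly and independently with
replacement from all `k`-subsets of `[n]`. -/
def expHM (n k m : ℕ) (f : (Fin m → Finset (Fin n)) → ℝ) : ℝ :=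
  ∑ H : Fin m → Finset (Fin n),
    (∏ i : Fin m, if H i ∈ kSets n k then ((kSets n k).card : ℝ)⁻¹ else 0) * f H

/-- Probability of `H` under `H_k(n,m)`: `m` distinct edges chosen uniformly without
replacement. -/
def probHnm (n k m : ℕ) (H : Finset (Finset (Fin n))) : ℝ :=
  if H ⊆ kSets n k ∧ H.card = m then ((kSets n k).card.choose m : ℝ)⁻¹ else 0

/-- Expectation of `f` over `H_k(n,m)`. -/
def expHnm (n k m : ℕ) (f : Finset (Finset (Fin n)) → ℝ) : ℝ :=
  ∑ H : Finset (Finset (Fin n)), probHnm n k m H * f H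

/-- Number of vertices with color `true` (i.e. `|σ⁻¹(1)|`). -/
def numPlus {n : ℕ} (σ : Fin n → Bool) : ℕ :=
  (Finset.univ.filter fun v => σ v = true).card

/-- A coloring is balanced if `||σ⁻¹(1)| − n/2| ≤ √n`. -/
def isBalanced {n : ℕ} (σ : Fin n → Bool) : Prop :=
  |(numPlus σ : ℝ) - n / 2| ≤ Real.sqrt n

/-- The overlap `⟨σ,τ⟩ = ∑_v σ(v)τ(v)`. -/
def overlap {n : ℕ} (σ τ : Fin n → Bool) : ℤ :=
  ∑ _v ∈ Finset.univ.filter (fun v : Fin n => σ v = τ v), (1:ℤ) +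
    ∑ _v ∈ Finset.univ.filter (fun v : Fin n => σ v ≠ τ v), (-1:ℤ)

/-- The cluster size `C_β(H,σ)`. -/
def clusterSize {n : ℕ} (β : ℝ) (H : Finset (Finset (Fin n))) (σ : Fin n → Bool) : ℝ :=
  ∑ τ : Fin n → Bool,
    if 2 * (n:ℝ) / 3 ≤ (overlap σ τ : ℝ) then Real.exp (-β * (monoCount H τ : ℝ)) else 0

/-- The entropy function `H(z)`. -/
def entH (z : ℝ) : ℝ := -z * Real.log z - (1 - z) * Real.log (1 - z)

/-- The second-moment exponent `Λ_β(α)`. -/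
def Lam (k : ℕ) (d β α : ℝ) : ℝ :=
  entH ((1 + α) / 2) +
    d / k * Real.log (1 - (2:ℝ) ^ ((1:ℤ) - k) * (1 - Real.exp (-β)) *
      (2 - (1 - Real.exp (-β)) * ((1 + α) ^ k + (1 - α) ^ k) / 2 ^ k))

/-- The pair partition function `Z_β(α)` with `α = 2ν/n − 1`, i.e. overlap `2ν − n`. -/
def Zpair {n m : ℕ} (β : ℝ) (ν : ℕ) (H : Fin m → Finset (Fin n)) : ℝ :=
  ∑ σ : Fin n → Bool, ∑ τ : Fin n → Bool,
    if isBalanced σ ∧ isBalanced τ ∧ overlap σ τ = 2 * (ν:ℤ) - (n:ℤ) then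
      Real.exp (-β * ((monoCountM H σ : ℝ) + (monoCountM H τ : ℝ)))
    else 0

/-- Partition function of a multi-hypergraph restricted to balanced colorings. -/
def ZpMbal {n m : ℕ} (β : ℝ) (H : Fin m → Finset (Fin n)) : ℝ :=
  ∑ τ : Fin n → Bool,
    if isBalanced τ then Real.exp (-β * (monoCountM H τ : ℝ)) else 0

/-- `m₀ = 2^{1−k}·e^{−β}·m/(1 − 2^{1−k}(1 − e^{−β}))`. -/
def m0Of (k : ℕ) (β : ℝ) (m : ℕ) : ℝ :=
  (2:ℝ) ^ ((1:ℤ) - k) * Real.exp (-β) * m / (1 - (2:ℝ) ^ ((1:ℤ) - k) * (1 - Real.exp (-β)))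

/-- The probability `p₁` of a monochromatic edge in the planted model. -/
def p1Planted (n k : ℕ) (d β : ℝ) : ℝ :=
  Real.exp (-β) * d /
    ((1 - (2:ℝ) ^ ((1:ℤ) - k) * (1 - Real.exp (-β))) * ((n - 1).choose (k - 1) : ℝ))

/-- The probability `p₂` of a bichromatic edge in the planted model. -/
def p2Planted (n k : ℕ) (d β : ℝ) : ℝ :=
  d / ((1 - (2:ℝ) ^ ((1:ℤ) - k) * (1 - Real.exp (-β))) * ((n - 1).choose (k - 1) : ℝ))

/-- Conditional probability of the hypergraph `H` in the planted model given the planted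
coloring `σ`: monochromatic edges appear with probability `q1`, bichromatic ones with `q2`. -/
def probPlanted (n k : ℕ) (q1 q2 : ℝ) (σ : Fin n → Bool)
    (H : Finset (Finset (Fin n))) : ℝ :=
  if H ⊆ kSets n k then
    (∏ e ∈ (kSets n k).filter (fun e => isMono σ e), if e ∈ H then q1 else 1 - q1) *
      ∏ e ∈ (kSets n k).filter (fun e => ¬ isMono σ e), if e ∈ H then q2 else 1 - q2
  else 0

/-- Probability of an event in the planted model `(σ̂, G)`. -/
def prPlanted (n k : ℕ) (q1 q2 : ℝ)
    (A : (Fin n → Bool) → Finset (Finset (Fin n)) → Prop) : ℝ :=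
  ∑ σ : Fin n → Bool, ∑ H : Finset (Finset (Fin n)),
    ((2:ℝ)⁻¹) ^ n * probPlanted n k q1 q2 σ H * (if A σ H then 1 else 0)

/-- `β_crit(d,k)`, as an extended real (so `⊤ = ∞` if the set is empty). -/
def betaCrit (k : ℕ) (d : ℝ) : EReal :=
  sInf ((fun β : ℝ => (β : EReal)) ''
    {β : ℝ | 0 < β ∧ limsup (freeEnergySeq k d β) atTop < phiBound k d β})

/-- `v` supports the edge `e`: `v ∈ e` and every other vertex of `e` has color `−σ(v)`. -/
def supportsEdge {n : ℕ} (σ : Fin n → Bool) (v : Fin n) (e : Finset (Fin n)) : Prop :=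
  v ∈ e ∧ ∀ w ∈ e, w ≠ v → σ w = !(σ v)

/-- An edge `e` is `U`-endangered: all vertices of `U ∩ e` have the same color. -/
def endangered {n : ℕ} (σ : Fin n → Bool) (U : Finset (Fin n)) (e : Finset (Fin n)) : Prop :=
  ∀ v ∈ U ∩ e, ∀ w ∈ U ∩ e, σ v = σ w

/-- A set `V'` satisfying the two core conditions CR1 and CR2. -/
def goodSet {n : ℕ} (H : Finset (Finset (Fin n))) (σ : Fin n → Bool)
    (V' : Finset (Fin n)) : Prop :=
  (∀ v ∈ V', 100 ≤ (H.filter fun e => supportsEdge σ v e ∧ e ⊆ V').card) ∧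
    ∀ v ∈ V', (H.filter fun e => v ∈ e ∧ endangered σ V' e).card ≤ 10

/-- The core: the largest set satisfying CR1 and CR2 (the union of all such sets). -/
def coreSet {n : ℕ} (H : Finset (Finset (Fin n))) (σ : Fin n → Bool) : Finset (Fin n) :=
  Finset.univ.filter fun v => ∃ V', goodSet H σ V' ∧ v ∈ V'

/-- The backbone: vertices outside the core supporting an edge into the core and occurring
in no `({v} ∪ core)`-endangered edge. -/
def backboneSet {n : ℕ} (H : Finset (Finset (Fin n))) (σ : Fin n → Bool) : Finset (Fin n) :=
  Finset.univ.filter fun v => v ∉ coreSet H σ ∧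
    (∃ e ∈ H, supportsEdge σ v e ∧ e \ {v} ⊆ coreSet H σ) ∧
    ∀ e ∈ H, v ∈ e → ¬ endangered σ (insert v (coreSet H σ)) e

/-- The remaining vertices. -/
def restSet {n : ℕ} (H : Finset (Finset (Fin n))) (σ : Fin n → Bool) : Finset (Fin n) :=
  Finset.univ \ (coreSet H σ ∪ backboneSet H σ)

/-- The free vertices: vertices of the rest all of whose edges meet the core in a
bichromatic set. -/
def freeSet {n : ℕ} (H : Finset (Finset (Fin n))) (σ : Fin n → Bool) : Finset (Fin n) :=
  (restSet H σ).filter fun v => ∀ e ∈ H, v ∈ e →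
    ∃ w1 ∈ e ∩ coreSet H σ, ∃ w2 ∈ e ∩ coreSet H σ, σ w1 ≠ σ w2




/-- entropy -/

lemma aux_log_ge (y : ℝ) (hy : 0 < y) : 1 - y⁻¹ ≤ Real.log y := by
  have h := Real.log_le_sub_one_of_pos (show (0:ℝ) < y⁻¹ by positivity)
  rw [Real.log_inv] at h
  linarith

lemma aux_mul_log_max (s a : ℝ) (hs : 0 < s) : s * (a - Real.log s) ≤ Real.exp (a - 1) := by
  have hy : (0:ℝ) < Real.exp (a-1) / s := by positivity
  have h := Real.log_le_sub_one_of_pos hy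
  rw [Real.log_div (by positivity) (ne_of_gt hs), Real.log_exp] at h
  have h2 : (a - 1 - Real.log s) * s ≤ (Real.exp (a-1)/s - 1) * s :=
    mul_le_mul_of_nonneg_right h hs.le
  have h3 : (Real.exp (a-1)/s) * s = Real.exp (a-1) := div_mul_cancel₀ _ (ne_of_gt hs)
  nlinarith [h2, h3]

lemma aux_t_log_t (t : ℝ) (ht : 0 ≤ t) : 2*t - 2*Real.sqrt t ≤ t * Real.log t := by
  rcases eq_or_lt_of_le ht with h | h
  · simp [← h]
  · have hst : 0 < Real.sqrt t := Real.sqrt_pos.mpr h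
    have h1 := aux_log_ge (Real.sqrt t) hst
    have h2 : Real.log (Real.sqrt t) = Real.log t / 2 := Real.log_sqrt ht
    have h3 : t / Real.sqrt t = Real.sqrt t := Real.div_sqrt
    have h4 : t * (Real.sqrt t)⁻¹ = Real.sqrt t := by
      rw [← div_eq_mul_inv]; exact h3
    nlinarith [h]

lemma aux_pinsker (u : ℝ) (h0 : 0 ≤ u) (h1 : u ≤ 1) :
    u^2/2 ≤ (1+u)*Real.log (1+u) + (1-u)*Real.log (1-u) := by
  have ha := aux_t_log_t (1+u) (by linarith)
  have hb := aux_t_log_t (1-u) (by linarith)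
  have hsum : Real.sqrt (1+u) + Real.sqrt (1-u) ≤ 2 - u^2/4 := by
    have hs1 : (0:ℝ) ≤ 1+u := by linarith
    have hs2 : (0:ℝ) ≤ 1-u := by linarith
    have hsq : (Real.sqrt (1+u) + Real.sqrt (1-u))^2 = 2 + 2*Real.sqrt ((1+u)*(1-u)) := by
      rw [add_sq, Real.sq_sqrt hs1, Real.sq_sqrt hs2, Real.sqrt_mul hs1]
      ring
    have hmid : Real.sqrt ((1+u)*(1-u)) ≤ 1 - u^2/2 := by
      have : (1+u)*(1-u) ≤ (1 - u^2/2)^2 := by nlinarith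
      calc Real.sqrt ((1+u)*(1-u)) ≤ Real.sqrt ((1-u^2/2)^2) := Real.sqrt_le_sqrt this
        _ = 1 - u^2/2 := Real.sqrt_sq (by nlinarith)
    have hnn : 0 ≤ Real.sqrt (1+u) + Real.sqrt (1-u) := by positivity
    nlinarith [hsq, hmid, Real.sq_sqrt hs1, Real.sq_sqrt hs2,
      sq_nonneg (Real.sqrt (1+u) + Real.sqrt (1-u) - (2 - u^2/4))]
  nlinarith [ha, hb, hsum]


lemma aux_nat_mul_sub_one_nonneg (n : ℕ) : (0:ℝ) ≤ (n:ℝ)*((n:ℝ)-1) := by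
  rcases n with _ | m
  · norm_num
  · have : (1:ℝ) ≤ ((m+1:ℕ):ℝ) := by exact_mod_cast Nat.one_le_iff_ne_zero.mpr (by omega)
    nlinarith

lemma aux_bonferroni (ε : ℝ) (h0 : 0 ≤ ε) (h1 : ε ≤ 1) :
    ∀ k : ℕ, (1-ε)^k ≤ 1 - k*ε + k*((k:ℝ)-1)/2*ε^2 := by
  intro k
  induction k with
  | zero => norm_num
  | succ n ih =>
    have hnn : (0:ℝ) ≤ 1 - ε := by linarith
    have step : (1-ε)^(n+1) ≤ (1 - n*ε + n*((n:ℝ)-1)/2*ε^2) * (1-ε) := by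
      rw [pow_succ]
      exact mul_le_mul_of_nonneg_right ih hnn
    have h2 : (1 - n*ε + n*((n:ℝ)-1)/2*ε^2) * (1-ε)
        ≤ 1 - ((n:ℝ)+1)*ε + ((n:ℝ)+1)*((n:ℝ)+1-1)/2*ε^2 := by
      nlinarith [mul_nonneg (aux_nat_mul_sub_one_nonneg n) (pow_nonneg h0 3)]
    push_cast
    push_cast at step h2
    linarith

lemma aux_fg (u : ℝ) (h0 : 0 ≤ u) (h1 : u ≤ 1) :
    ∀ m : ℕ, (1+u)^m - (1-u)^m ≤ 2*m*u*(1+u)^m ∧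
      (1+u)^m + (1-u)^m ≤ 2 + 2*(m:ℝ)^2*u^2*(1+u)^m := by
  intro m
  induction m with
  | zero => norm_num
  | succ n ih =>
    obtain ⟨ihg, ihf⟩ := ih
    have ha0 : (0:ℝ) ≤ (1+u)^n := by positivity
    have ha1 : (1:ℝ) ≤ (1+u)^n := by
      have := pow_le_pow_left₀ (by norm_num : (0:ℝ) ≤ 1) (by linarith : (1:ℝ) ≤ 1+u) n
      simpa using this
    have hb0 : (0:ℝ) ≤ (1-u)^n := pow_nonneg (by linarith) n
    have hba : (1-u)^n ≤ (1+u)^n := pow_le_pow_left₀ (by linarith) (by linarith) n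
    have h5 : (1+u)^n ≤ (1+u)^(n+1) := by rw [pow_succ]; nlinarith
    constructor
    · have heq : (1+u)^(n+1) - (1-u)^(n+1)
          = ((1+u)^n - (1-u)^n) + u*((1+u)^n + (1-u)^n) := by ring
      rw [heq]
      have h2 : u*((1+u)^n + (1-u)^n) ≤ u*(2*(1+u)^n) :=
        mul_le_mul_of_nonneg_left (by linarith) h0
      have h4 : 2*((n:ℝ)+1)*u*(1+u)^n ≤ 2*((n:ℝ)+1)*u*(1+u)^(n+1) :=
        mul_le_mul_of_nonneg_left h5 (by positivity)
      push_cast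
      nlinarith [ihg, h2, h4]
    · have heq : (1+u)^(n+1) + (1-u)^(n+1)
          = ((1+u)^n + (1-u)^n) + u*((1+u)^n - (1-u)^n) := by ring
      rw [heq]
      have h2 : u*((1+u)^n - (1-u)^n) ≤ u*(2*n*u*(1+u)^n) :=
        mul_le_mul_of_nonneg_left ihg h0
      have h6 : 2*(n:ℝ)^2*u^2*(1+u)^n ≤ 2*(n:ℝ)^2*u^2*(1+u)^(n+1) :=
        mul_le_mul_of_nonneg_left h5 (by positivity)
      have h7 : 2*(n:ℝ)*u^2*(1+u)^n ≤ 2*(n:ℝ)*u^2*(1+u)^(n+1) :=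
        mul_le_mul_of_nonneg_left h5 (by positivity)
      have h8 : (0:ℝ) ≤ u^2*(1+u)^(n+1) := by positivity
      have hn0 : (0:ℝ) ≤ (n:ℝ) := Nat.cast_nonneg n
      push_cast
      nlinarith [ihf, h2, h6, h7, h8, hn0]

lemma aux_cube_le (k : ℕ) (hk : 35 ≤ k) : (k:ℝ)^3 ≤ 1200 * (10/9)^k := by
  induction k, hk using Nat.le_induction with
  | base => norm_num
  | succ n hn ih =>
    have hn' : (35:ℝ) ≤ (n:ℝ) := by exact_mod_cast hn
    have hp : (0:ℝ) < (10/9:ℝ)^n := by positivity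
    push_cast
    rw [pow_succ ((10:ℝ)/9) n]
    nlinarith [ih, hn', hp]

lemma aux_sq_le_two_pow (k : ℕ) (hk : 4 ≤ k) : (k:ℝ)^2 ≤ 2^k := by
  induction k, hk using Nat.le_induction with
  | base => norm_num
  | succ n hn ih =>
    have hn' : (4:ℝ) ≤ (n:ℝ) := by exact_mod_cast hn
    push_cast
    rw [pow_succ (2:ℝ) n]
    nlinarith [ih, hn']

lemma aux_exp_neg_le (y : ℝ) (h0 : 0 ≤ y) (h1 : y ≤ 1) :
    Real.exp (-y) ≤ 1 - (1 - Real.exp (-1))*y := by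
  have h := convexOn_exp.2 (Set.mem_univ (-1:ℝ)) (Set.mem_univ (0:ℝ))
    h0 (by linarith : (0:ℝ) ≤ 1 - y) (by ring)
  simp only [smul_eq_mul] at h
  have e0 : y * (-1) + (1-y) * 0 = -y := by ring
  rw [e0, Real.exp_zero] at h
  linarith



lemma aux_log10_lt : Real.log 10 < 2.4 := by
  have h : (10:ℝ) < Real.exp 2.4 := by
    have e1 := Real.exp_one_gt_d9
    have e2 : (1.4:ℝ) ≤ Real.exp 0.4 := by
      have := Real.add_one_le_exp (0.4:ℝ); linarith
    have h3 : Real.exp 2.4 = Real.exp 1 * Real.exp 1 * Real.exp 0.4 := by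
      rw [← Real.exp_add, ← Real.exp_add]; norm_num
    rw [h3]
    nlinarith [Real.exp_pos (0.4:ℝ)]
  calc Real.log 10 < Real.log (Real.exp 2.4) := by
        apply Real.log_lt_log (by norm_num) h
    _ = 2.4 := Real.log_exp _
  
lemma aux_exp_neg_one_lt : Real.exp (-1) ≤ 0.368 := by
  rw [Real.exp_neg]
  have h := Real.exp_one_gt_d9
  rw [inv_le_comm₀ (Real.exp_pos 1) (by norm_num)]
  calc (0.368:ℝ)⁻¹ ≤ 2.7182818283 := by norm_num
    _ ≤ Real.exp 1 := h.le

lemma aux_exp_036 : Real.exp 0.36 ≤ 1.5625 := by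
  have h := Real.add_one_le_exp (-0.36 : ℝ)
  have h2 : Real.exp (-0.36) = (Real.exp 0.36)⁻¹ := Real.exp_neg _
  have hp := Real.exp_pos (0.36:ℝ)
  rw [h2] at h
  have h3 : (0.64:ℝ) ≤ (Real.exp 0.36)⁻¹ := by linarith
  have := (inv_le_inv₀ (by positivity) (by norm_num : (0:ℝ) < 0.64)).mpr h3
  simpa using this.trans_eq (by norm_num)

lemma aux_log_tangent (ε ε₀ : ℝ) (hε : 0 < ε) (hε₀ : 0 < ε₀) :
    Real.log ε ≤ Real.log ε₀ + ε/ε₀ - 1 := by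
  have h := Real.log_le_sub_one_of_pos (show (0:ℝ) < ε/ε₀ by positivity)
  rw [Real.log_div (ne_of_gt hε) (ne_of_gt hε₀)] at h
  linarith

lemma entH_half : entH (1/2) = Real.log 2 := by
  have : Real.log (1/2 : ℝ) = -Real.log 2 := by
    rw [one_div, Real.log_inv]
  simp only [entH]
  rw [show (1:ℝ) - 1/2 = 1/2 by norm_num, this]
  ring

lemma entH_symm (z : ℝ) : entH (1 - z) = entH z := by
  simp only [entH, sub_sub_cancel]
  ring

lemma entH_one : entH 1 = 0 := by
  simp [entH]

lemma entH_le (ε : ℝ) (h0 : 0 < ε) (h1 : ε < 1) : entH ε ≤ ε - ε * Real.log ε := by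
  have h := aux_log_ge (1 - ε) (by linarith)
  have h2 : (1-ε) * (1 - (1-ε)⁻¹) ≤ (1-ε) * Real.log (1-ε) :=
    mul_le_mul_of_nonneg_left h (by linarith)
  have h3 : (1-ε) * (1 - (1-ε)⁻¹) = -ε := by
    have hne : (1:ℝ) - ε ≠ 0 := by linarith
    field_simp
    ring
  rw [h3] at h2
  simp only [entH]
  linarith

lemma log2_sub_entH (u : ℝ) (h0 : 0 < u) (h1 : u < 1) :
    Real.log 2 - entH ((1+u)/2) = ((1+u)*Real.log (1+u) + (1-u)*Real.log (1-u))/2 := by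
  have e1 : Real.log ((1+u)/2) = Real.log (1+u) - Real.log 2 :=
    Real.log_div (by linarith) (by norm_num)
  have e2 : (1:ℝ) - (1+u)/2 = (1-u)/2 := by ring
  have e3 : Real.log ((1-u)/2) = Real.log (1-u) - Real.log 2 :=
    Real.log_div (by linarith) (by norm_num)
  simp only [entH, e2, e1, e3]
  ring

lemma aux_neg_mul_log (ε ε₀ : ℝ) (hε : 0 < ε) (hε₀ : 0 < ε₀) :
    -(ε * Real.log ε) ≤ ε * (-Real.log ε₀) + ε₀ - ε := by
  have h := aux_log_tangent ε⁻¹ ε₀⁻¹ (by positivity) (by positivity)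
  rw [Real.log_inv, Real.log_inv] at h
  have h2 : ε⁻¹ / ε₀⁻¹ = ε₀ / ε := by
    field_simp
  rw [h2] at h
  have h3 := mul_le_mul_of_nonneg_left h hε.le
  have h4 : ε * (ε₀/ε) = ε₀ := by field_simp
  nlinarith [h3, h4]

set_option maxHeartbeats 1000000 in
lemma keyLemma (k : ℕ) (hk : 7000 ≤ k) (x : ℝ) (hx1 : 1/2 < x) (hx2 : x ≤ 1) :
    entH x + (Real.log 2 - ((2:ℝ)^k)⁻¹) * (x^k + (1-x)^k - 2*((2:ℝ)^k)⁻¹) < Real.log 2 := by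
  have hkR : (7000:ℝ) ≤ (k:ℝ) := by exact_mod_cast hk
  have hkR0 : (0:ℝ) ≤ (k:ℝ) := by linarith
  have hP : (0:ℝ) < 2^k := by positivity
  set T : ℝ := ((2:ℝ)^k)⁻¹ with hTdef
  have hT0 : 0 < T := by rw [hTdef]; positivity
  have hTP : T * 2^k = 1 := by rw [hTdef]; exact inv_mul_cancel₀ (ne_of_gt hP)
  clear_value T
  have hk2 : (k:ℝ)^2 ≤ 2^k := aux_sq_le_two_pow k (by omega)
  have hk2T : (k:ℝ)^2 * T ≤ 1 := by
    calc (k:ℝ)^2 * T ≤ 2^k * T := mul_le_mul_of_nonneg_right hk2 hT0.le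
      _ = 1 := by rw [mul_comm]; exact hTP
  have hk2big : (49000000:ℝ) ≤ (k:ℝ)^2 := by nlinarith only [hkR]
  have hTsm : T ≤ 0.0000001 := by
    have h := mul_le_mul_of_nonneg_right hk2big hT0.le
    linarith only [h, hk2T]
  have hkTnn : (0:ℝ) ≤ (k:ℝ)*T := mul_nonneg hkR0 hT0.le
  have hkT : (k:ℝ) * T ≤ 0.001 := by
    have h := mul_le_mul_of_nonneg_right hkR hkTnn
    have h2 : (k:ℝ) * ((k:ℝ)*T) = (k:ℝ)^2*T := by ring
    rw [h2] at h
    linarith only [h, hk2T]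
  have hl2a : (0.6931:ℝ) < Real.log 2 := by
    have := Real.log_two_gt_d9; linarith
  have hl2b : Real.log 2 < 0.6932 := by
    have := Real.log_two_lt_d9; linarith
  set D : ℝ := Real.log 2 - T with hDdef
  clear_value D
  have hD0 : (0.693:ℝ) ≤ D := by rw [hDdef]; linarith only [hl2a, hTsm, hT0]
  have hD1 : D ≤ 0.6932 := by rw [hDdef]; linarith only [hl2b, hT0]
  have hDnn : (0:ℝ) ≤ D := by linarith only [hD0]
  have hlog2D : Real.log 2 = D + T := by rw [hDdef]; ring
  have hTl2 : 0.6931 * T ≤ Real.log 2 * T := mul_le_mul_of_nonneg_right hl2a.le hT0.le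
  have hTT : T * T ≤ 0.0000001 * T := mul_le_mul_of_nonneg_right hTsm hT0.le
  by_cases hxone : x = 1
  · subst hxone
    rw [entH_one]
    have h1 : (1:ℝ)^k = 1 := one_pow k
    have h0 : ((1:ℝ)-1)^k = 0 := by
      rw [sub_self]; exact zero_pow (by omega)
    rw [h1, h0]
    have e1 : D * (1 + 0 - 2*T) = D - 2*(D*T) := by ring
    have e2 : D*T ≤ 0.6932*T := mul_le_mul_of_nonneg_right hD1 hT0.le
    have e3 : (0:ℝ) ≤ D*T := mul_nonneg hDnn hT0.le
    linarith only [e1, e3, hT0, hlog2D]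
  have hxlt : x < 1 := lt_of_le_of_ne hx2 hxone
  by_cases hA : x ≤ 9/10
  · -- middle case
    obtain ⟨u, hxu, hu0, hu1, hu2⟩ :
        ∃ u : ℝ, x = (1+u)/2 ∧ 0 < u ∧ u ≤ 4/5 ∧ u < 1 :=
      ⟨2*x - 1, by ring, by linarith, by linarith, by linarith⟩
    have hpin := aux_pinsker u hu0.le (by linarith)
    have hid := log2_sub_entH u hu0 hu2
    have hent : u^2/4 ≤ Real.log 2 - entH x := by
      rw [hxu, hid]; linarith only [hpin]
    have hxk : x^k = T*(1+u)^k := by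
      rw [hxu, div_pow, hTdef]; ring
    have hxk2 : (1-x)^k = T*(1-u)^k := by
      rw [hxu]
      have h9 : (1:ℝ) - (1+u)/2 = (1-u)/2 := by ring
      rw [h9, div_pow, hTdef]; ring
    have hF := (aux_fg u hu0.le (by linarith) k).2
    have h95 : (1+u)^k ≤ (9/5:ℝ)^k := pow_le_pow_left₀ (by linarith) (by linarith) k
    set W : ℝ := (9/10:ℝ)^k with hWdef
    have hW0 : (0:ℝ) < W := by positivity
    have h910 : (9/5:ℝ)^k * T = W := by
      rw [hWdef, hTdef, show (9/10:ℝ) = 9/5 * 2⁻¹ by norm_num, mul_pow, inv_pow]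
    have hcube := aux_cube_le k (by omega)
    have hWk3 : (k:ℝ)^3 * W ≤ 1200 := by
      have h2 : (10/9:ℝ)^k * W = 1 := by
        rw [hWdef, ← mul_pow]; norm_num
      calc (k:ℝ)^3 * W ≤ (1200*(10/9)^k) * W := mul_le_mul_of_nonneg_right hcube hW0.le
        _ = 1200 * ((10/9:ℝ)^k * W) := by ring
        _ = 1200 := by rw [h2]; norm_num
    clear_value W
    have hWk2 : (k:ℝ)^2 * W ≤ 12/70 := by
      have h3 : 7000*((k:ℝ)^2*W) ≤ (k:ℝ)*((k:ℝ)^2*W) :=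
        mul_le_mul_of_nonneg_right hkR (mul_nonneg (sq_nonneg _) hW0.le)
      have h4 : (k:ℝ)*((k:ℝ)^2*W) = (k:ℝ)^3*W := by ring
      linarith only [h3, h4.le, hWk3]
    have hΔ : x^k + (1-x)^k - 2*T ≤ 2*u^2*((k:ℝ)^2*W) := by
      rw [hxk, hxk2]
      have s1 : T*(1+u)^k + T*(1-u)^k - 2*T = T*((1+u)^k + (1-u)^k - 2) := by ring
      rw [s1]
      have s2 : (1+u)^k + (1-u)^k - 2 ≤ 2*(k:ℝ)^2*u^2*(1+u)^k := by linarith only [hF]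
      have s3 : T*((1+u)^k + (1-u)^k - 2) ≤ T*(2*(k:ℝ)^2*u^2*(1+u)^k) :=
        mul_le_mul_of_nonneg_left s2 hT0.le
      have s4 : T*(2*(k:ℝ)^2*u^2*(1+u)^k) ≤ T*(2*(k:ℝ)^2*u^2*(9/5)^k) := by
        apply mul_le_mul_of_nonneg_left _ hT0.le
        apply mul_le_mul_of_nonneg_left h95 (by positivity)
      have s5 : T*(2*(k:ℝ)^2*u^2*(9/5)^k) = 2*u^2*((k:ℝ)^2*((9/5)^k*T)) := by ring
      rw [s5, h910] at s4
      linarith only [s3, s4]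
    have hu2pos : 0 < u^2 := pow_pos hu0 2
    have hfin1 : D * (x^k + (1-x)^k - 2*T) ≤ D * (2*u^2*((k:ℝ)^2*W)) :=
      mul_le_mul_of_nonneg_left hΔ hDnn
    have hfin2 : D * (2*u^2*((k:ℝ)^2*W)) ≤ 0.6932 * (2*u^2*((k:ℝ)^2*W)) :=
      mul_le_mul_of_nonneg_right hD1
        (mul_nonneg (by positivity) (mul_nonneg (sq_nonneg _) hW0.le))
    have hfin2b : 0.6932 * (2*u^2*((k:ℝ)^2*W)) ≤ 0.6932 * (2*u^2*(12/70)) := by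
      have := mul_le_mul_of_nonneg_left hWk2 (show (0:ℝ) ≤ 2*u^2 by positivity)
      linarith only [this]
    have hfin3 : 0.6932 * (2*u^2*(12/70)) < u^2/4 := by linarith only [hu2pos]
    linarith only [hent, hfin1, hfin2, hfin2b, hfin3]
  · -- boundary case
    push_neg at hA
    obtain ⟨ε, hxe, hε0, hε1⟩ :
        ∃ ε : ℝ, x = 1 - ε ∧ 0 < ε ∧ ε < 1/10 :=
      ⟨1 - x, by ring, by linarith, by linarith⟩
    rw [hxe, entH_symm, show (1:ℝ)-(1-ε) = ε by ring]
    have hkpos : (0:ℝ) < (k:ℝ) := by linarith only [hkR]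
    have hk2pos : (0:ℝ) < (k:ℝ)^2 := pow_pos hkpos 2
    have hEnt : entH ε ≤ ε - ε * Real.log ε := entH_le ε hε0 (by linarith only [hε1])
    have hεk : ε^k ≤ ε^2 := pow_le_pow_of_le_one hε0.le (by linarith) (by omega)
    have hεε : ε^2 ≤ (1/10)*ε := by
      have := mul_le_mul_of_nonneg_right hε1.le hε0.le
      nlinarith only [this]
    by_cases hB1 : ε ≤ ((k:ℝ)^2)⁻¹
    · -- tight regime
      have hbon := aux_bonferroni ε hε0.le (by linarith) k
      have hbon2 : (1-ε)^k ≤ 1 - k*ε + (k:ℝ)^2/2*ε^2 := by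
        have hnn : (0:ℝ) ≤ (k:ℝ) * ε^2 := by positivity
        linarith only [hbon, hnn]
      have hk2ε : (k:ℝ)^2 * ε ≤ 1 := by
        calc (k:ℝ)^2 * ε ≤ (k:ℝ)^2 * ((k:ℝ)^2)⁻¹ := mul_le_mul_of_nonneg_left hB1 hk2pos.le
          _ = 1 := mul_inv_cancel₀ (ne_of_gt hk2pos)
      have hεsm : ε ≤ 0.0000001 := by
        have h7 : ((k:ℝ)^2)⁻¹ ≤ 0.0000001 := by
          rw [inv_le_comm₀ hk2pos (by norm_num)]
          calc (0.0000001:ℝ)⁻¹ ≤ 49000000 := by norm_num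
            _ ≤ (k:ℝ)^2 := hk2big
        linarith only [hB1, h7]
      set s : ℝ := ε * 2^k with hsdef
      have hs0 : 0 < s := by rw [hsdef]; exact mul_pos hε0 hP
      have hεs : ε = s * T := by
        rw [hsdef, hTdef]
        field_simp
      have hlogs : Real.log ε = Real.log s - k * Real.log 2 := by
        rw [hsdef, Real.log_mul (ne_of_gt hε0) (ne_of_gt hP), Real.log_pow]
        ring
      clear_value s
      have hL5 : s * (1.36 - Real.log s) ≤ 1.5625 := by
        have h5 := aux_mul_log_max s 1.36 hs0
        have h2 : Real.exp (1.36 - 1) = Real.exp 0.36 := by norm_num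
        rw [h2] at h5
        linarith only [h5, aux_exp_036]
      have hM : D * (1 - 2*T) ≤ Real.log 2 - 2.3*T := by
        rw [hDdef]
        have e1 : (Real.log 2 - T) * (1-2*T)
            = Real.log 2 - 2*(Real.log 2 * T) - T + 2*(T*T) := by ring
        rw [e1]
        linarith only [hTl2, hTT, hT0]
      have hΔb : (1-ε)^k + ε^k - 2*T ≤ (1 - 2*T) + (-((k:ℝ)*ε) + (k:ℝ)^2/2*ε^2 + ε^2) := by
        linarith only [hbon2, hεk]
      have hDM := mul_le_mul_of_nonneg_left hΔb hDnn
      have t1 : (k:ℝ)^2*ε*ε ≤ 1*ε := mul_le_mul_of_nonneg_right hk2ε hε0.le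
      have t3 : (0:ℝ) ≤ (k:ℝ)^2*ε*ε := mul_nonneg (mul_nonneg (sq_nonneg _) hε0.le) hε0.le
      have hq1 : D * ((k:ℝ)^2/2*ε^2) ≤ 0.35 * ε := by
        have t2 : D * ((k:ℝ)^2/2*ε^2) = D/2*((k:ℝ)^2*ε*ε) := by ring
        rw [t2]
        have u1 : D/2*((k:ℝ)^2*ε*ε) ≤ 0.6932/2*((k:ℝ)^2*ε*ε) :=
          mul_le_mul_of_nonneg_right (by linarith) t3
        have u2 : 0.6932/2*((k:ℝ)^2*ε*ε) ≤ 0.6932/2*(1*ε) :=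
          mul_le_mul_of_nonneg_left t1 (by norm_num)
        linarith only [u1, u2, hε0]
      have hq2 : D * ε^2 ≤ 0.001 * ε := by
        have u1 : D*ε^2 ≤ 0.6932*ε^2 := mul_le_mul_of_nonneg_right hD1 (sq_nonneg ε)
        have u3 : 0.6932*ε ≤ 0.001 := by linarith only [hεsm]
        have u4 := mul_le_mul_of_nonneg_right u3 hε0.le
        linarith only [u1, u4]
      have hq3 : -(D * ((k:ℝ)*ε)) ≤ -(Real.log 2)*((k:ℝ)*ε) + 0.001*ε := by
        rw [hDdef]
        have hTk : T * ((k:ℝ)*ε) ≤ 0.001 * ε := by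
          have u5 := mul_le_mul_of_nonneg_right hkT hε0.le
          linarith only [u5]
        linarith only [hTk]
      have hmain : ε - ε*Real.log ε - (Real.log 2)*((k:ℝ)*ε) + 0.352*ε ≤ 1.5625 * T := by
        have he1 : ε - ε*Real.log ε - (Real.log 2)*((k:ℝ)*ε) + 0.352*ε
            = ε * (1.352 - Real.log s) := by
          rw [hlogs]; ring
        rw [he1]
        have he2 : ε * (1.352 - Real.log s) ≤ ε * (1.36 - Real.log s) :=
          mul_le_mul_of_nonneg_left (by linarith) hε0.le
        have he3 : ε * (1.36 - Real.log s) = T * (s * (1.36 - Real.log s)) := by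
          rw [hεs]; ring
        rw [he3] at he2
        calc ε * (1.352 - Real.log s) ≤ T * (s*(1.36 - Real.log s)) := he2
          _ ≤ T * 1.5625 := mul_le_mul_of_nonneg_left hL5 hT0.le
          _ = 1.5625 * T := by ring
      have hexp : D * ((1 - 2*T) + (-((k:ℝ)*ε) + (k:ℝ)^2/2*ε^2 + ε^2))
          = D*(1-2*T) + (-(D*((k:ℝ)*ε)) + D*((k:ℝ)^2/2*ε^2) + D*ε^2) := by ring
      rw [hexp] at hDM
      linarith only [hDM, hM, hq1, hq2, hq3, hEnt, hmain, hT0]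
    · -- moderate regime
      push_neg at hB1
      have hee : (1-ε)^k ≤ Real.exp (-((k:ℝ)*ε)) := by
        have h1 : 1-ε ≤ Real.exp (-ε) := by
          have := Real.add_one_le_exp (-ε); linarith only [this]
        calc (1-ε)^k ≤ (Real.exp (-ε))^k := pow_le_pow_left₀ (by linarith) h1 k
          _ = Real.exp (-((k:ℝ)*ε)) := by
            rw [← Real.exp_nat_mul]; ring_nf
      by_cases hkε : 1 ≤ (k:ℝ)*ε
      · -- kε ≥ 1
        have h1 : Real.exp (-((k:ℝ)*ε)) ≤ Real.exp (-1) :=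
          Real.exp_le_exp.mpr (by linarith)
        have htan := aux_neg_mul_log ε (1/10) hε0 (by norm_num)
        have hlog10 : -Real.log ((1:ℝ)/10) = Real.log 10 := by
          rw [one_div, Real.log_inv]; ring
        rw [hlog10] at htan
        have hl10a : (0:ℝ) ≤ Real.log 10 := Real.log_nonneg (by norm_num)
        have hl10b := aux_log10_lt
        have h6 : ε * Real.log 10 ≤ 0.24 := by
          have := mul_le_mul_of_nonneg_left hl10b.le hε0.le
          linarith only [this, hε1, hε0, hl10a]
        have hent34 : entH ε ≤ 0.34 := by linarith only [hEnt, htan, h6]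
        have hΔb : (1-ε)^k + ε^k - 2*T ≤ 0.378 := by
          linarith only [aux_exp_neg_one_lt, hεk, hεε, hT0, hee, h1, hε1, hε0]
        have hDM : D * ((1-ε)^k + ε^k - 2*T) ≤ 0.6932 * 0.378 := by
          calc D * ((1-ε)^k + ε^k - 2*T) ≤ D * 0.378 :=
                mul_le_mul_of_nonneg_left hΔb hDnn
            _ ≤ 0.6932 * 0.378 := mul_le_mul_of_nonneg_right hD1 (by norm_num)
        linarith only [hent34, hDM, hl2a]
      · -- kε < 1
        push_neg at hkε
        have hkε0 : (0:ℝ) ≤ (k:ℝ)*ε := mul_nonneg hkR0 hε0.le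
        have hconv := aux_exp_neg_le ((k:ℝ)*ε) hkε0 hkε.le
        have h632 : (0.632:ℝ) ≤ 1 - Real.exp (-1) := by
          linarith [aux_exp_neg_one_lt]
        have hconv2 : Real.exp (-((k:ℝ)*ε)) ≤ 1 - 0.632*((k:ℝ)*ε) := by
          have := mul_le_mul_of_nonneg_right h632 hkε0
          linarith only [hconv, this]
        have htan := aux_neg_mul_log ε (((k:ℝ)^2)⁻¹) hε0 (inv_pos.mpr hk2pos)
        have hloginv : -Real.log (((k:ℝ)^2)⁻¹) = 2 * Real.log k := by
          rw [Real.log_inv]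
          have h8 : Real.log ((k:ℝ)^2) = 2 * Real.log k := by
            rw [Real.log_pow]; norm_num
          rw [h8]; ring
        rw [hloginv] at htan
        have hent2 : entH ε ≤ ε + 2*ε*Real.log k := by
          have h9 : ((k:ℝ)^2)⁻¹ - ε ≤ 0 := by linarith only [hB1]
          nlinarith only [hEnt, htan, h9]
        have hlogk : Real.log k ≤ 2*Real.sqrt k - 2 := by
          have hs := Real.log_le_sub_one_of_pos
            (Real.sqrt_pos.mpr hkpos)
          have h2 : Real.log (Real.sqrt k) = Real.log k / 2 :=
            Real.log_sqrt (Nat.cast_nonneg k)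
          rw [h2] at hs
          linarith only [hs]
        have hsq : Real.sqrt k ≤ (k:ℝ)/80 := by
          have h1 : Real.sqrt k ≤ Real.sqrt (((k:ℝ)/80)^2) :=
            Real.sqrt_le_sqrt (by nlinarith only [hkR, Nat.cast_nonneg (α := ℝ) k])
          rwa [Real.sqrt_sq (by positivity)] at h1
        have hc : 1 + 2*Real.log k + 0.07 ≤ 0.437 * k := by linarith only [hlogk, hsq, hkR]
        have hce := mul_le_mul_of_nonneg_right hc hε0.le
        have hΔb : (1-ε)^k + ε^k - 2*T ≤ (1 - 0.632*((k:ℝ)*ε)) + ε^2 - 2*T := by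
          linarith only [hee.trans hconv2, hεk]
        have hDM := mul_le_mul_of_nonneg_left hΔb hDnn
        have hDk : 0.693*((k:ℝ)*ε) ≤ D*((k:ℝ)*ε) :=
          mul_le_mul_of_nonneg_right hD0 hkε0
        have hDe : D*((1 - 0.632*((k:ℝ)*ε)) + ε^2 - 2*T)
            ≤ D - 0.437*((k:ℝ)*ε) + 0.6932*(0.1*ε) := by
          have e1 : D*((1 - 0.632*((k:ℝ)*ε)) + ε^2 - 2*T)
              = D - 0.632*(D*((k:ℝ)*ε)) + D*ε^2 - 2*(D*T) := by ring
          rw [e1]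
          have e2 : D*ε^2 ≤ 0.6932*ε^2 := mul_le_mul_of_nonneg_right hD1 (sq_nonneg ε)
          have e4 : 0.6932*ε^2 ≤ 0.6932*((1/10)*ε) := by linarith only [hεε]
          have e3 : (0:ℝ) ≤ D*T := by positivity
          linarith only [hDk, e2, e4, e3, hkε0]
        linarith only [hent2, hDM, hDe, hce, hT0, hε0.le, hlog2D]

set_option maxHeartbeats 1000000 in
theorem statement_14 (C : ℝ) (hC : 0 < C) :
    ∃ k0 : ℕ, ∀ k : ℕ, k0 ≤ k → ∀ d : ℝ, 0 < d →
      (2:ℝ) ^ (k - 1) * Real.log 2 - C ≤ d / k →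
      d / k ≤ (2:ℝ) ^ (k - 1) * Real.log 2 - 2 →
      ∀ β : ℝ, 0 ≤ β →
      ∀ α ∈ Set.Icc (-1:ℝ) 1, α ≠ 0 → Lam k d β α < Lam k d β 0 := by
  refine ⟨7000, ?_⟩
  intro k hk d hd _hd1 hd2 β hβ α hα hα0
  have hkR : (7000:ℝ) ≤ (k:ℝ) := by exact_mod_cast hk
  have hkpos : (0:ℝ) < (k:ℝ) := by linarith only [hkR]
  have hP : (0:ℝ) < (2:ℝ)^k := by positivity
  have hPne : ((2:ℝ)^k) ≠ 0 := ne_of_gt hP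
  have hP8 : (8:ℝ) ≤ (2:ℝ)^k := by
    calc (8:ℝ) = 2^3 := by norm_num
      _ ≤ (2:ℝ)^k := pow_le_pow_right₀ (by norm_num) (by omega)
  have hl2a : (0.6931:ℝ) < Real.log 2 := by have := Real.log_two_gt_d9; linarith
  have hl2b : Real.log 2 < 0.6932 := by have := Real.log_two_lt_d9; linarith
  -- basic quantities
  have hexpβ : Real.exp (-β) ≤ 1 := Real.exp_le_one_iff.mpr (by linarith)
  have hexpβ0 : 0 < Real.exp (-β) := Real.exp_pos _
  simp only [Lam, add_zero, sub_zero, one_pow]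
  set γ : ℝ := 1 - Real.exp (-β) with hγdef
  have hγ0 : 0 ≤ γ := by rw [hγdef]; linarith only [hexpβ]
  have hγ1 : γ ≤ 1 := by rw [hγdef]; linarith only [hexpβ0]
  clear_value γ
  have hq : (2:ℝ) ^ ((1:ℤ) - k) = 2*((2:ℝ)^k)⁻¹ := by
    rw [zpow_sub₀ (two_ne_zero), zpow_one, zpow_natCast, div_eq_mul_inv]
  set T : ℝ := ((2:ℝ)^k)⁻¹ with hTdef
  have hT0 : 0 < T := by rw [hTdef]; positivity
  have hTP : T * 2^k = 1 := by rw [hTdef]; exact inv_mul_cancel₀ hPne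
  have hT18 : T ≤ 1/8 := by
    have h := inv_anti₀ (by norm_num : (0:ℝ) < 8) hP8
    rw [hTdef]
    linarith only [h]
  clear_value T
  -- x
  have hα1 : |α| ≤ 1 := abs_le.mpr ⟨hα.1, hα.2⟩
  have hαpos : 0 < |α| := abs_pos.mpr hα0
  set x : ℝ := (1 + |α|)/2 with hxdef
  have hx1 : 1/2 < x := by rw [hxdef]; linarith only [hαpos]
  have hx2 : x ≤ 1 := by rw [hxdef]; linarith only [hα1]
  have hx0 : 0 ≤ x := by linarith only [hx1]
  have h1x0 : 0 ≤ 1 - x := by linarith only [hx2]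
  -- symmetrization
  have hS : (1+α)^k + (1-α)^k = 2^k*x^k + 2^k*(1-x)^k := by
    rcases le_or_gt 0 α with h | h
    · have habs : |α| = α := abs_of_nonneg h
      have e1 : 1+α = 2*x := by rw [hxdef, habs]; ring
      have e2 : 1-α = 2*(1-x) := by rw [hxdef, habs]; ring
      rw [e1, e2, mul_pow, mul_pow]
    · have habs : |α| = -α := abs_of_neg h
      have e1 : 1+α = 2*(1-x) := by rw [hxdef, habs]; ring
      have e2 : 1-α = 2*x := by rw [hxdef, habs]; ring
      rw [e1, e2, mul_pow, mul_pow]; ring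
  have hent : entH ((1+α)/2) = entH x := by
    rcases le_or_gt 0 α with h | h
    · have habs : |α| = α := abs_of_nonneg h
      rw [hxdef, habs]
    · have habs : |α| = -α := abs_of_neg h
      have e1 : (1+α)/2 = 1 - x := by rw [hxdef, habs]; ring
      rw [e1, entH_symm]
  clear_value x
  -- Delta
  set Δ : ℝ := x^k + (1-x)^k - 2*T with hΔdef
  have hΔ0 : 0 ≤ Δ := by
    have hconv := (convexOn_pow k).2 (Set.mem_Ici.mpr hx0) (Set.mem_Ici.mpr h1x0)
      (by norm_num : (0:ℝ) ≤ 1/2) (by norm_num : (0:ℝ) ≤ 1/2) (by norm_num)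
    simp only [smul_eq_mul] at hconv
    have e1 : (1/2:ℝ) * x + 1/2 * (1-x) = 1/2 := by ring
    rw [e1] at hconv
    have e2 : (1/2:ℝ)^k = T := by
      rw [hTdef, div_pow, one_pow, one_div]
    rw [hΔdef]
    rw [e2] at hconv
    linarith only [hconv]
  clear_value Δ
  -- the quadratic identities
  set c : ℝ := 2*T*γ with hcdef
  have hc0 : 0 ≤ c := by rw [hcdef]; exact mul_nonneg (mul_nonneg (by norm_num) hT0.le) hγ0
  have hcq : c ≤ 2*T := by
    rw [hcdef]
    nlinarith only [hT0, hγ1, hγ0]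
  clear_value c
  have h1c : (0:ℝ) < 1 - c := by linarith only [hcq, hT18, hT0]
  have h1cq : 1 - 2*T ≤ 1 - c := by linarith only [hcq]
  have h1cq0 : (0:ℝ) < 1 - 2*T := by linarith only [hT18]
  have e0 : (1:ℝ) - 2^((1:ℤ)-(k:ℤ))*γ*(2 - γ*(1+1)/2^k) = (1-c)^2 := by
    rw [hq, hcdef, hTdef]
    field_simp
    ring
  have eα : (1:ℝ) - 2^((1:ℤ)-(k:ℤ))*γ*(2 - γ*((1+α)^k + (1-α)^k)/2^k)
      = (1-c)^2 + 2*T*γ^2*Δ := by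
    rw [hq, hS, hcdef, hΔdef, hTdef]
    field_simp
    ring
  rw [e0, eα, hent, entH_half]
  -- positivity of the log arguments
  have hA0 : (0:ℝ) < (1-c)^2 := pow_pos h1c 2
  have hAδ : (0:ℝ) ≤ 2*T*γ^2*Δ := mul_nonneg (mul_nonneg (by linarith only [hT0]) (sq_nonneg γ)) hΔ0
  have hAα : (0:ℝ) < (1-c)^2 + 2*T*γ^2*Δ := by linarith only [hA0, hAδ]
  -- log bound
  have hlog : Real.log ((1-c)^2 + 2*T*γ^2*Δ) - Real.log ((1-c)^2)
      ≤ 2*T*γ^2*Δ/(1-c)^2 := by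
    have h1 := Real.log_le_sub_one_of_pos (div_pos hAα hA0)
    rw [Real.log_div (ne_of_gt hAα) (ne_of_gt hA0)] at h1
    have h2 : ((1-c)^2 + 2*T*γ^2*Δ)/(1-c)^2 - 1 = 2*T*γ^2*Δ/(1-c)^2 := by
      field_simp
      ring
    linarith only [h1, h2.le, h2.ge]
  -- coefficient bound
  have hdk0 : (0:ℝ) ≤ d/(k:ℝ) := div_nonneg hd.le hkpos.le
  have hcoef : d/(k:ℝ) * (2*T*γ^2/(1-c)^2) ≤ Real.log 2 - T := by
    have hpow : (2:ℝ)^(k-1) = 2^k/2 := by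
      rw [eq_div_iff (two_ne_zero)]
      rw [← pow_succ]
      congr 1
      omega
    rw [hpow] at hd2
    have hγ2 : γ^2 ≤ 1 := by nlinarith only [hγ0, hγ1]
    have hX : 2*T*γ^2/(1-c)^2 ≤ 2*T/(1-2*T)^2 := by
      have n1 : 2*T*γ^2 ≤ 2*T := by nlinarith only [hT0, hγ2]
      have n2 : (1-2*T)^2 ≤ (1-c)^2 := pow_le_pow_left₀ h1cq0.le h1cq 2
      exact div_le_div₀ (by linarith only [hT0]) n1 (pow_pos h1cq0 2) n2
    have hXnn : (0:ℝ) ≤ 2*T/(1-2*T)^2 := div_nonneg (by linarith only [hT0]) (sq_nonneg _)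
    have step1 : d/(k:ℝ) * (2*T*γ^2/(1-c)^2) ≤ d/(k:ℝ) * (2*T/(1-2*T)^2) :=
      mul_le_mul_of_nonneg_left hX hdk0
    have step2 : d/(k:ℝ) * (2*T/(1-2*T)^2) ≤ ((2:ℝ)^k/2*Real.log 2 - 2) * (2*T/(1-2*T)^2) :=
      mul_le_mul_of_nonneg_right hd2 hXnn
    have e5 : ((2:ℝ)^k/2*Real.log 2 - 2)*(2*T) = Real.log 2 - 4*T := by
      linear_combination Real.log 2 * hTP
    have step3 : ((2:ℝ)^k/2*Real.log 2 - 2) * (2*T/(1-2*T)^2)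
        = (Real.log 2 - 4*T)/(1-2*T)^2 := by
      rw [← mul_div_assoc, e5]
    have step4 : (Real.log 2 - 4*T)/(1-2*T)^2 ≤ Real.log 2 - T := by
      rw [div_le_iff₀ (pow_pos h1cq0 2)]
      have m1 : Real.log 2*T ≤ 0.6932*T := mul_le_mul_of_nonneg_right hl2b.le hT0.le
      have m4 : (0:ℝ) ≤ T^2*(4*Real.log 2 + 4 - 4*T) :=
        mul_nonneg (sq_nonneg T) (by linarith only [hl2a, hT18])
      linarith only [m1, m4, hT0]
    linarith only [step1, step2, step3.le, step3.ge, step4]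
  -- final assembly
  have hfin1 : d/(k:ℝ) * (Real.log ((1-c)^2 + 2*T*γ^2*Δ) - Real.log ((1-c)^2))
      ≤ d/(k:ℝ) * (2*T*γ^2*Δ/(1-c)^2) := mul_le_mul_of_nonneg_left hlog hdk0
  have hfin2 : d/(k:ℝ) * (2*T*γ^2*Δ/(1-c)^2) = (d/(k:ℝ) * (2*T*γ^2/(1-c)^2)) * Δ := by
    ring
  have hfin3 : (d/(k:ℝ) * (2*T*γ^2/(1-c)^2)) * Δ ≤ (Real.log 2 - T) * Δ :=
    mul_le_mul_of_nonneg_right hcoef hΔ0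
  have hkey := keyLemma k hk x hx1 hx2
  rw [← hTdef] at hkey
  rw [← hΔdef] at hkey
  linarith only [hkey, hfin1, hfin2.le, hfin2.ge, hfin3]
end
end

section
/- For every C > 0 there exist c > 0 and an integer k0 such that for all k ≥ k0, all d > 0 with |d/k − 2^{k−1}·ln 2| ≤ C, and all β ≥ k·ln 2 − ln k: sup_{α ∈ [2/3, 1 − k^{−5}]} Λ_β(α) ≤ Λ_β(1) − c·k^{−5}. -/
noncomputable section

open Finset Filter Real
open scoped Classical BigOperators

lemma log_one_sub_diff {a b : ℝ} (ha : 0 ≤ a) (hab : a ≤ b) (hb : b < 1) :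
    b - a ≤ Real.log (1 - a) - Real.log (1 - b) := by
  have h1 : (0:ℝ) < 1 - b := by linarith
  have h2 : (0:ℝ) < 1 - a := by linarith
  have h := Real.log_le_sub_one_of_pos (x := (1 - b) / (1 - a)) (by positivity)
  rw [Real.log_div (by linarith) (by linarith)] at h
  have h3 : (1 - b) / (1 - a) - 1 = (a - b) / (1 - a) := by field_simp; ring
  rw [h3] at h
  have h4 : (a - b) / (1 - a) ≤ a - b := by
    rw [div_le_iff₀ h2]
    nlinarith
  linarith

lemma entH_le_aux {w : ℝ} (hw0 : 0 < w) (hw : w ≤ 1/6) :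
    entH (1 - w) ≤ 1.2 * w + w * Real.log w⁻¹ := by
  have hz0 : (0:ℝ) < 1 - w := by linarith
  have h1 : Real.log (1-w)⁻¹ ≤ (1-w)⁻¹ - 1 := Real.log_le_sub_one_of_pos (by positivity)
  rw [Real.log_inv] at h1
  have h2 : (1-w)⁻¹ - 1 = w / (1-w) := by field_simp; ring
  have h3 : w / (1-w) ≤ 1.2 * w := by
    rw [div_le_iff₀ hz0]; nlinarith
  have h12 : -Real.log (1-w) ≤ 1.2 * w := by rw [h2] at h1; linarith
  have hlog : Real.log (1-w) ≤ 0 := Real.log_nonpos (by linarith) (by linarith)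
  have hwL : w * Real.log (1-w) ≤ 0 := mul_nonpos_of_nonneg_of_nonpos hw0.le hlog
  unfold entH
  rw [show (1:ℝ) - (1-w) = w by ring, Real.log_inv]
  nlinarith


set_option maxHeartbeats 1000000 in
lemma core_ineq {k : ℕ} (hk : 10000 ≤ k) {w : ℝ}
    (hw1 : 1/(2*(k:ℝ)^5) ≤ w) (hw2 : w ≤ 1/6) :
    w * Real.log w⁻¹ + 1.24 * w ≤ 0.69 * (1 - (1-w)^k) := by
  have hkR : (10000:ℝ) ≤ (k:ℝ) := by exact_mod_cast hk
  have hkpos : (0:ℝ) < k := by linarith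
  have hw0 : 0 < w := lt_of_lt_of_le (by positivity) hw1
  have hzw : (0:ℝ) ≤ 1 - w := by linarith
  have hexp : (1-w)^k ≤ Real.exp (-((k:ℝ)*w)) := by
    have h1 : 1 - w ≤ Real.exp (-w) := by
      have := Real.add_one_le_exp (-w); linarith
    calc (1-w)^k ≤ (Real.exp (-w))^k := pow_le_pow_left₀ hzw h1 k
    _ = Real.exp ((k:ℝ) * (-w)) := (Real.exp_nat_mul _ k).symm
    _ = Real.exp (-((k:ℝ)*w)) := by ring_nf
  rcases le_or_gt w (1/(k:ℝ)) with hc1 | hc1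
  · -- Case 1 : k*w ≤ 1
    have ht1 : (k:ℝ)*w ≤ 1 := by
      rw [← mul_one_div_cancel (ne_of_gt hkpos)]
      exact mul_le_mul_of_nonneg_left hc1 hkpos.le
    have ht0 : (0:ℝ) ≤ (k:ℝ)*w := by positivity
    have hexp2 : Real.exp (-((k:ℝ)*w)) ≤ (1 + (k:ℝ)*w)⁻¹ := by
      rw [Real.exp_neg]
      exact inv_anti₀ (by linarith) (by have := Real.add_one_le_exp ((k:ℝ)*w); linarith)
    have h3 : (1 + (k:ℝ)*w)⁻¹ ≤ 1 - (k:ℝ)*w/2 := by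
      rw [inv_eq_one_div, div_le_iff₀ (by positivity)]
      nlinarith
    -- log bound
    have hwinv : w⁻¹ ≤ 2*(k:ℝ)^5 := by
      have := inv_anti₀ (by positivity : (0:ℝ) < 1/(2*(k:ℝ)^5)) hw1
      simpa using this
    have hlogw : Real.log w⁻¹ ≤ Real.log (2*(k:ℝ)^5) := Real.log_le_log (by positivity) hwinv
    have hlogsplit : Real.log (2*(k:ℝ)^5) = Real.log 2 + 5 * Real.log k := by
      rw [Real.log_mul (by norm_num) (by positivity), Real.log_pow]; norm_num
    have hsqk : Real.sqrt k ≤ (k:ℝ)/100 := by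
      have h100 : (100:ℝ) ≤ Real.sqrt k := by
        have := Real.sqrt_le_sqrt hkR
        rwa [show (10000:ℝ) = 100^2 by norm_num, Real.sqrt_sq (by norm_num : (0:ℝ) ≤ 100)] at this
      nlinarith [Real.sq_sqrt hkpos.le, Real.sqrt_nonneg (k:ℝ)]
    have hlogk : Real.log k ≤ 2 * Real.sqrt k := by
      have hs0 : (0:ℝ) < Real.sqrt k := Real.sqrt_pos.mpr hkpos
      have := Real.log_le_sub_one_of_pos hs0
      rw [Real.log_sqrt hkpos.le] at this
      linarith
    have hlog2 : Real.log w⁻¹ ≤ 0.694 + 0.1*(k:ℝ) := by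
      have := Real.log_two_lt_d9
      linarith
    have hA : w * Real.log w⁻¹ ≤ w * (0.694 + 0.1*(k:ℝ)) :=
      mul_le_mul_of_nonneg_left hlog2 hw0.le
    have hB : w * (0.694 + 0.1*(k:ℝ)) + 1.24*w ≤ 0.345*((k:ℝ)*w) := by
      nlinarith [mul_nonneg (by linarith : (0:ℝ) ≤ 0.245*(k:ℝ) - 1.934) hw0.le]
    have hC : 0.345*((k:ℝ)*w) ≤ 0.69 * (1 - (1-w)^k) := by linarith
    linarith
  · rcases le_or_gt w (1/100) with hc2 | hc2
    · -- Case 2 : 1/k < w ≤ 1/100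
      have hkw1 : (1:ℝ) ≤ (k:ℝ)*w := by
        have := (div_lt_iff₀ hkpos).mp hc1
        nlinarith
      have hexp3 : Real.exp (-((k:ℝ)*w)) ≤ Real.exp (-1) :=
        Real.exp_le_exp.mpr (by linarith)
      have hexpinv : Real.exp (-1) ≤ 0.371 := by
        rw [Real.exp_neg]
        have h1 : (Real.exp 1)⁻¹ ≤ (2.7:ℝ)⁻¹ :=
          inv_anti₀ (by norm_num) (by have := Real.exp_one_gt_d9; linarith)
        have : ((2.7:ℝ))⁻¹ ≤ 0.371 := by norm_num
        linarith
      set s := Real.sqrt w with hs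
      have hs2 : s^2 = w := Real.sq_sqrt hw0.le
      have hs0 : 0 < s := Real.sqrt_pos.mpr hw0
      have hlogs : Real.log w⁻¹ ≤ 2 * s⁻¹ := by
        have h1 : Real.log s⁻¹ ≤ s⁻¹ - 1 := Real.log_le_sub_one_of_pos (by positivity)
        rw [Real.log_inv] at h1
        have h2 : Real.log w = 2 * Real.log s := by
          rw [← hs2, Real.log_pow]; norm_num
        rw [Real.log_inv, h2]; linarith
      have hws : w * Real.log w⁻¹ ≤ 2 * s := by
        have := mul_le_mul_of_nonneg_left hlogs hw0.le
        have he : w * (2 * s⁻¹) = 2 * s := by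
          rw [← hs2]; field_simp
        linarith [he ▸ this]
      have hsle : s ≤ 1/10 := by
        have := Real.sqrt_le_sqrt hc2
        rwa [show (1/100:ℝ) = (1/10)^2 by norm_num, Real.sqrt_sq (by norm_num : (0:ℝ) ≤ 1/10)] at this
      have hwk : (1-w)^k ≤ 0.371 := by linarith
      linarith
    · -- Case 3 : 1/100 < w ≤ 1/6
      have hkw : (100:ℝ) ≤ (k:ℝ)*w := by nlinarith
      have hexp100 : Real.exp (-((k:ℝ)*w)) ≤ 0.0004 := by
        have h50 : (51:ℝ) ≤ Real.exp 50 := by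
          have := Real.add_one_le_exp (50:ℝ); linarith
        have h100 : (2601:ℝ) ≤ Real.exp 100 := by
          rw [show (100:ℝ) = 50+50 by norm_num, Real.exp_add]; nlinarith
        have h1 : Real.exp (-((k:ℝ)*w)) ≤ Real.exp (-100) := Real.exp_le_exp.mpr (by linarith)
        have h2 : Real.exp (-100) ≤ (2601:ℝ)⁻¹ := by
          rw [Real.exp_neg]
          exact inv_anti₀ (by norm_num) h100
        have : ((2601:ℝ))⁻¹ ≤ 0.0004 := by norm_num
        linarith
      have hwk : (1-w)^k ≤ 0.0004 := le_trans hexp hexp100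
      have hlognn : 0 ≤ Real.log w⁻¹ := by
        apply Real.log_nonneg
        have : (1/6:ℝ)⁻¹ ≤ w⁻¹ := inv_anti₀ hw0 hw2
        norm_num at this; linarith
      rcases le_or_gt w (1/12) with hc3 | hc3
      · -- 3a
        have hwinv : w⁻¹ ≤ 128 := by
          have : w⁻¹ ≤ (1/100:ℝ)⁻¹ := inv_anti₀ (by norm_num) hc2.le
          norm_num at this; linarith
        have hlogw : Real.log w⁻¹ ≤ 4.8521 := by
          have h1 : Real.log w⁻¹ ≤ Real.log 128 := Real.log_le_log (by positivity) hwinv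
          have h2 : Real.log (128:ℝ) = 7 * Real.log 2 := by
            rw [show (128:ℝ) = 2^7 by norm_num, Real.log_pow]; norm_num
          have := Real.log_two_lt_d9
          linarith
        have : w * Real.log w⁻¹ ≤ (1/12) * 4.8521 :=
          mul_le_mul hc3 hlogw hlognn (by norm_num)
        linarith
      · -- 3b
        have hwinv : w⁻¹ ≤ 16 := by
          have : w⁻¹ ≤ (1/12:ℝ)⁻¹ := inv_anti₀ (by norm_num) hc3.le
          norm_num at this; linarith
        have hlogw : Real.log w⁻¹ ≤ 2.7726 := by
          have h1 : Real.log w⁻¹ ≤ Real.log 16 := Real.log_le_log (by positivity) hwinv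
          have h2 : Real.log (16:ℝ) = 4 * Real.log 2 := by
            rw [show (16:ℝ) = 2^4 by norm_num, Real.log_pow]; norm_num
          have := Real.log_two_lt_d9
          linarith
        have : w * Real.log w⁻¹ ≤ (1/6) * 2.7726 :=
          mul_le_mul hw2 hlogw hlognn (by norm_num)
        linarith

lemma Lam_eq (k : ℕ) (d β α : ℝ) :
    Lam k d β α = entH ((1+α)/2) + d/k * Real.log (1 - (2:ℝ)^((1:ℤ)-(k:ℤ)) *
      (1 - Real.exp (-β)) * (2 - (1 - Real.exp (-β)) * (((1+α)/2)^k + ((1-α)/2)^k))) := by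
  have h : (1 - Real.exp (-β)) * ((1 + α) ^ k + (1 - α) ^ k) / 2 ^ k
      = (1 - Real.exp (-β)) * (((1+α)/2)^k + ((1-α)/2)^k) := by
    rw [div_pow, div_pow]; ring
  simp only [Lam]
  rw [h]

set_option maxHeartbeats 2000000 in
theorem statement_19 (C : ℝ) (hC : 0 < C) :
    ∃ c : ℝ, 0 < c ∧ ∃ k0 : ℕ, ∀ k : ℕ, k0 ≤ k → ∀ d : ℝ, 0 < d →
      |d / k - (2:ℝ) ^ (k - 1) * Real.log 2| ≤ C →
      ∀ β : ℝ, (k:ℝ) * Real.log 2 - Real.log k ≤ β →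
      ∀ α ∈ Set.Icc (2/3 : ℝ) (1 - (k:ℝ) ^ (-(5:ℤ))),
        Lam k d β α ≤ Lam k d β 1 - c * (k:ℝ) ^ (-(5:ℤ)) := by
  refine ⟨1/100, by norm_num, 10000 + ⌈2000*C⌉₊, fun k hk d hd hdC β hβ α hα => ?_⟩
  have hk4 : 10000 ≤ k := by omega
  have hkne : k ≠ 0 := by omega
  have hkR : (10000:ℝ) ≤ (k:ℝ) := by exact_mod_cast hk4
  have hkpos : (0:ℝ) < k := by linarith
  have hkC : 2000*C ≤ (k:ℝ) := by
    have h1 : ⌈2000*C⌉₊ ≤ k := by omega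
    exact le_trans (Nat.le_ceil _) (by exact_mod_cast h1)
  have hk2k : (k:ℝ) ≤ 2^k := by exact_mod_cast (Nat.lt_two_pow_self (n := k)).le
  -- 2000 k ≤ 2^k
  have h2000n : 2000*k ≤ 2^k := by
    have h1 : k - 11 + 11 = k := by omega
    have h2 : k - 11 < 2^(k-11) := Nat.lt_two_pow_self
    have h3 : 2048*(k - 11 + 1) ≤ 2048 * 2^(k-11) := Nat.mul_le_mul_left _ (by omega)
    have h4 : (2048:ℕ) * 2^(k-11) = 2^k := by
      rw [show (2048:ℕ) = 2^11 by norm_num, ← pow_add]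
      congr 1; omega
    calc 2000*k ≤ 2048*(k - 11 + 1) := by omega
    _ ≤ 2^k := by rw [← h4]; exact h3
  have h2000R : 2000*(k:ℝ) ≤ 2^k := by exact_mod_cast h2000n
  have h2kpos : (0:ℝ) < 2^k := by positivity
  -- exp(-β) small
  have he0 : 0 < Real.exp (-β) := Real.exp_pos _
  have hek : Real.exp (-β) ≤ 1/2000 := by
    have h1 : Real.exp (-β) ≤ Real.exp (Real.log k - (k:ℝ)*Real.log 2) :=
      Real.exp_le_exp.mpr (by linarith)
    have h2 : Real.exp (Real.log k - (k:ℝ)*Real.log 2) = (k:ℝ)/2^k := by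
      rw [Real.exp_sub, Real.exp_log hkpos, Real.exp_nat_mul, Real.exp_log (by norm_num : (0:ℝ) < 2)]
    have h3 : (k:ℝ)/2^k ≤ 1/2000 := by
      rw [div_le_div_iff₀ h2kpos (by norm_num)]; linarith
    linarith [h2 ▸ h1]
  -- epsilon facts
  have hε1 : 1 - Real.exp (-β) < 1 := by linarith
  have hε0 : (1999/2000:ℝ) ≤ 1 - Real.exp (-β) := by linarith
  have hεpos : (0:ℝ) < 1 - Real.exp (-β) := by linarith
  -- kappa and w facts
  have hκ : (k:ℝ)^(-(5:ℤ)) = ((k:ℝ)^5)⁻¹ := by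
    rw [zpow_neg]; norm_num
  have hκpos : (0:ℝ) < (k:ℝ)^(-(5:ℤ)) := by rw [hκ]; positivity
  obtain ⟨hα1, hα2⟩ := hα
  have hw1 : 1/(2*(k:ℝ)^5) ≤ (1-α)/2 := by
    have : ((k:ℝ)^5)⁻¹ ≤ 1 - α := by rw [← hκ]; linarith
    rw [div_le_div_iff₀ (by positivity) (by norm_num)]
    rw [inv_le_iff_one_le_mul₀ (by positivity : (0:ℝ) < (k:ℝ)^5)] at this
    nlinarith
  have hw0 : (0:ℝ) < (1-α)/2 := lt_of_lt_of_le (by positivity) hw1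
  have hw2 : (1-α)/2 ≤ 1/6 := by linarith
  have hκ2w : (k:ℝ)^(-(5:ℤ)) ≤ 2*((1-α)/2) := by
    rw [hκ]
    have h1 : ((k:ℝ)^5)⁻¹ = 2*(1/(2*(k:ℝ)^5)) := by field_simp
    rw [h1]; linarith
  -- rewrite the goal
  rw [Lam_eq k d β α, Lam_eq k d β 1]
  rw [show ((1+(1:ℝ))/2)^k + ((1-(1:ℝ))/2)^k = 1 by norm_num [zero_pow hkne]]
  rw [show ((1:ℝ)+1)/2 = 1 by norm_num, entH_one, mul_one]
  set e := Real.exp (-β) with hedef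
  set E := (2:ℝ)^((1:ℤ)-(k:ℤ)) with hEdef
  set z := (1+α)/2 with hzdef
  set w := (1-α)/2 with hwdef
  have hzw : z + w = 1 := by rw [hzdef, hwdef]; ring
  have hz1 : z ≤ 1 := by linarith
  have hz0 : (0:ℝ) ≤ z := by linarith
  have hE : E = 2/2^k := by
    rw [hEdef, zpow_sub₀ (by norm_num : (2:ℝ) ≠ 0), zpow_one, zpow_natCast]
  have hEpos : 0 < E := by rw [hE]; positivity
  -- powers
  have hzk : z^k ≤ z := pow_le_of_le_one hz0 hz1 hkne
  have hwk : w^k ≤ w := pow_le_of_le_one hw0.le (by linarith) hkne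
  have hP0 : (0:ℝ) ≤ z^k + w^k := by positivity
  have hP1 : z^k + w^k ≤ 1 := by linarith
  have hS0 : (0:ℝ) ≤ 1 - z^k - w^k := by linarith
  -- x bounds
  have hx1_0 : 0 ≤ E*(1-e)*(2-(1-e)) := by
    apply mul_nonneg (mul_nonneg hEpos.le hεpos.le); linarith
  have hx_le : E*(1-e)*(2-(1-e)) ≤ E*(1-e)*(2-(1-e)*(z^k+w^k)) := by
    apply mul_le_mul_of_nonneg_left _ (mul_nonneg hEpos.le hεpos.le)
    nlinarith
  have hxα1 : E*(1-e)*(2-(1-e)*(z^k+w^k)) < 1 := by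
    have hEe : E*(1-e) ≤ E := by nlinarith
    have hc : E*(1-e)*(2-(1-e)*(z^k+w^k)) ≤ (E*(1-e))*2 := by
      apply mul_le_mul_of_nonneg_left _ (mul_nonneg hEpos.le hεpos.le)
      nlinarith [mul_nonneg hεpos.le hP0]
    have hE8 : E ≤ 1/8 := by
      rw [hE, div_le_div_iff₀ h2kpos (by norm_num)]; linarith
    nlinarith
  have hlogstep : (E*(1-e)*(2-(1-e)*(z^k+w^k)) - E*(1-e)*(2-(1-e)))
      ≤ Real.log (1 - E*(1-e)*(2-(1-e))) - Real.log (1 - E*(1-e)*(2-(1-e)*(z^k+w^k))) :=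
    log_one_sub_diff hx1_0 hx_le hxα1
  have hdiff : E*(1-e)*(2-(1-e)*(z^k+w^k)) - E*(1-e)*(2-(1-e))
      = E*(1-e)^2*(1 - z^k - w^k) := by ring
  have hdk : 0 < d/(k:ℝ) := div_pos hd hkpos
  -- the factor bound
  have hfactor : (0.69:ℝ) ≤ d/(k:ℝ)*E*(1-e)^2 := by
    have hd1 : (2:ℝ)^(k-1)*Real.log 2 - C ≤ d/k := by
      have := abs_le.mp hdC; linarith [this.1]
    have hE2 : (2:ℝ)^(k-1) * E = 1 := by
      rw [hE, mul_div_assoc', show (2:ℝ)^(k-1)*2 = 2^k from by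
        rw [← pow_succ]; congr 1; omega, div_self (ne_of_gt h2kpos)]
    have hCE : C * E ≤ 0.001 := by
      rw [hE, mul_div_assoc']
      rw [div_le_iff₀ h2kpos]
      nlinarith
    have hdE : Real.log 2 - 0.001 ≤ d/(k:ℝ) * E := by
      have h1 : ((2:ℝ)^(k-1)*Real.log 2 - C) * E ≤ d/(k:ℝ) * E :=
        mul_le_mul_of_nonneg_right hd1 hEpos.le
      have h2 : ((2:ℝ)^(k-1)*Real.log 2 - C) * E = Real.log 2 - C*E := by
        linear_combination Real.log 2 * hE2
      linarith
    have hε2 : (0.999:ℝ) ≤ (1-e)^2 := by nlinarith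
    have hl2 : (0.6931:ℝ) ≤ Real.log 2 := by linarith [Real.log_two_gt_d9]
    have hq : (0.6921:ℝ)*(0.999) ≤ (d/(k:ℝ)*E)*(1-e)^2 :=
      mul_le_mul (by linarith) hε2 (by norm_num) (by linarith)
    nlinarith
  -- chain
  have hchain : 0.69*(1 - z^k - w^k)
      ≤ d/(k:ℝ) * (Real.log (1 - E*(1-e)*(2-(1-e))) - Real.log (1 - E*(1-e)*(2-(1-e)*(z^k+w^k)))) := by
    have h1 : d/(k:ℝ) * (E*(1-e)*(2-(1-e)*(z^k+w^k)) - E*(1-e)*(2-(1-e)))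
        ≤ d/(k:ℝ) * (Real.log (1 - E*(1-e)*(2-(1-e))) - Real.log (1 - E*(1-e)*(2-(1-e)*(z^k+w^k)))) :=
      mul_le_mul_of_nonneg_left hlogstep hdk.le
    have h2 : d/(k:ℝ) * (E*(1-e)*(2-(1-e)*(z^k+w^k)) - E*(1-e)*(2-(1-e)))
        = (d/(k:ℝ)*E*(1-e)^2) * (1 - z^k - w^k) := by
      rw [hdiff]; ring
    have h3 : 0.69*(1 - z^k - w^k) ≤ (d/(k:ℝ)*E*(1-e)^2) * (1 - z^k - w^k) :=
      mul_le_mul_of_nonneg_right hfactor hS0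
    linarith
  -- entropy and core bounds
  have hent : entH z ≤ 1.2*w + w*Real.log w⁻¹ := by
    rw [show z = 1 - w from by rw [hzdef, hwdef]; ring]
    exact entH_le_aux hw0 hw2
  have hcore : w * Real.log w⁻¹ + 1.24*w ≤ 0.69*(1 - z^k) := by
    have := core_ineq hk4 hw1 hw2
    rwa [show (1:ℝ) - w = z from by rw [hzdef, hwdef]; ring] at this
  have hwkk : (0.69:ℝ)*w^k ≤ 0.02*w := by
    have h1 : w^k ≤ w^3 := pow_le_pow_of_le_one hw0.le (by linarith) (by omega)
    have h2 : w^3 ≤ (1/36)*w := by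
      have hsq : w*w ≤ 1/36 := by nlinarith
      nlinarith [mul_le_mul_of_nonneg_right hsq hw0.le]
    linarith
  -- finish
  have hfin : entH z + (1/100)*(k:ℝ)^(-(5:ℤ)) ≤ 0.69*(1 - z^k - w^k) := by
    linarith
  linarith
end
end
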